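/- Let ρ₀, ρ₁ be density operators and let α_β(ρ₀‖ρ₁) = inf over Hermitian T with 0 ≤ T ≤ I and tr(ρ₁ T) ≤ β of tr(ρ₀(I − T)). Then for every t ≥ 0, α_β(ρ₀‖ρ₁) ≥ tr(ρ₀ · {ρ₀ − t ρ₁ ≤ 0}) − t·β. -/

import Mathlib

open Matrix
open scoped ComplexOrder

lemma re_trace_nonneg {ι : Type*} [Fintype ι] [DecidableEq ι] {A : Matrix ι ι ℂ}
    (hA : A.PosSemidef) : 0 ≤ (Matrix.trace A).re := by
  have h : ∀ i, 0 ≤ A i i := fun i => by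
    exact hA.diag_nonneg
  rw [Matrix.trace, Complex.re_sum]
  exact Finset.sum_nonneg fun i _ => (Complex.le_def.mp (h i)).1

lemma re_trace_mul_nonneg {ι : Type*} [Fintype ι] [DecidableEq ι] {A B : Matrix ι ι ℂ}
    (hA : A.PosSemidef) (hB : B.PosSemidef) : 0 ≤ (Matrix.trace (A * B)).re := by
  obtain ⟨C, rfl⟩ : ∃ C : Matrix ι ι ℂ, B = Cᴴ * C := by
    open scoped MatrixOrder in exact CStarAlgebra.nonneg_iff_eq_star_mul_self.mp hB.nonneg
  rw [← mul_assoc, Matrix.trace_mul_cycle]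
  exact re_trace_nonneg (hA.mul_mul_conjTranspose_same C)

/-- Spectral projection of a Hermitian matrix onto the eigenspaces whose
eigenvalue satisfies the predicate `pred`. -/
noncomputable def specProj {ι : Type*} [Fintype ι] [DecidableEq ι]
    {A : Matrix ι ι ℂ} (hA : A.IsHermitian) (pred : ℝ → Prop) : Matrix ι ι ℂ :=
  letI := Classical.decPred pred
  (hA.eigenvectorUnitary : Matrix ι ι ℂ) *
    Matrix.diagonal (fun i => if pred (hA.eigenvalues i) then (1 : ℂ) else 0) *
    star (hA.eigenvectorUnitary : Matrix ι ι ℂ)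

/-- Minimum type-I error `α_β(ρ₀‖ρ₁)` of a binary quantum hypothesis test. -/
noncomputable def alphaE {ι : Type*} [Fintype ι] [DecidableEq ι]
    (ρ₀ ρ₁ : Matrix ι ι ℂ) (β : ℝ) : ℝ :=
  sInf {x : ℝ | ∃ T : Matrix ι ι ℂ, T.PosSemidef ∧ (1 - T).PosSemidef ∧
    (Matrix.trace (ρ₁ * T)).re ≤ β ∧ x = (Matrix.trace (ρ₀ * (1 - T))).re}

/-- lower bound on the minimum type-I error of a binary test
(Lemma 2): `α_β(ρ₀‖ρ₁) ≥ tr(ρ₀ · {ρ₀ − t ρ₁ ≤ 0}) − t·β`. -/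
theorem alphaE_ge_trace_nonposProj {ι : Type*} [Fintype ι] [DecidableEq ι]
    {ρ₀ ρ₁ : Matrix ι ι ℂ}
    (h₀ : ρ₀.PosSemidef) (h₀t : ρ₀.trace = 1)
    (h₁ : ρ₁.PosSemidef) (h₁t : ρ₁.trace = 1)
    {β : ℝ} (hβ : β ∈ Set.Icc (0 : ℝ) 1) {t : ℝ} (ht : 0 ≤ t)
    (hD : (ρ₀ - (t : ℂ) • ρ₁).IsHermitian) :
    alphaE ρ₀ ρ₁ β ≥
      (Matrix.trace (ρ₀ * specProj hD (fun x => x ≤ 0))).re - t * β := by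
  classical
  set U : Matrix ι ι ℂ := (hD.eigenvectorUnitary : Matrix ι ι ℂ) with hU
  set lam := hD.eigenvalues with hlam
  have hU2 : U * star U = 1 := (Matrix.mem_unitaryGroup_iff).mp hD.eigenvectorUnitary.2
  have hU1 : star U * U = 1 := (Matrix.mem_unitaryGroup_iff').mp hD.eigenvectorUnitary.2
  set M : (ι → ℂ) → Matrix ι ι ℂ := fun f => U * Matrix.diagonal f * star U with hM
  have hMmul : ∀ f g, M f * M g = M (f * g) := by
    intro f g
    simp only [hM]
    calc U * Matrix.diagonal f * star U * (U * Matrix.diagonal g * star U)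
        = U * Matrix.diagonal f * (star U * U) * Matrix.diagonal g * star U := by
          noncomm_ring
      _ = U * Matrix.diagonal (f * g) * star U := by
          rw [hU1, mul_one,
            show U * Matrix.diagonal f * Matrix.diagonal g * star U
              = U * (Matrix.diagonal f * Matrix.diagonal g) * star U by noncomm_ring,
            Matrix.diagonal_mul_diagonal]
          rfl
  have hMsub : ∀ f g, M f - M g = M (f - g) := by
    intro f g
    simp only [hM]
    calc U * Matrix.diagonal f * star U - U * Matrix.diagonal g * star U
        = U * (Matrix.diagonal f - Matrix.diagonal g) * star U := by noncomm_ring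
      _ = U * Matrix.diagonal (f - g) * star U := by rw [Matrix.diagonal_sub]; rfl
  have hM1 : M 1 = 1 := by
    have : Matrix.diagonal (1 : ι → ℂ) = 1 := Matrix.diagonal_one
    simp only [hM, this, mul_one, hU2]
  have hMpsd : ∀ f, (∀ i, 0 ≤ f i) → (M f).PosSemidef := by
    intro f hf
    rw [hM]
    simpa only [Matrix.star_eq_conjTranspose] using
      (Matrix.posSemidef_diagonal_iff.mpr hf).mul_mul_conjTranspose_same U
  have hDspec : ρ₀ - (t : ℂ) • ρ₁ = M (fun i => (lam i : ℂ)) := by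
    exact hD.spectral_theorem
  set e : ι → ℂ := fun i => if lam i ≤ 0 then 1 else 0 with he
  set dp : ι → ℂ := fun i => if lam i ≤ 0 then 0 else ((lam i : ℝ) : ℂ) with hdp
  set dm : ι → ℂ := fun i => if lam i ≤ 0 then ((-(lam i) : ℝ) : ℂ) else 0 with hdm
  have hPdef : specProj hD (fun x => x ≤ 0) = M e := by
    unfold specProj
    congr! 1
  set P := M e with hPe
  -- pointwise identities
  have hsplit : (fun i => (lam i : ℂ)) = dp - dm := by
    funext i
    simp only [hdp, hdm, Pi.sub_apply]
    by_cases h : lam i ≤ 0 <;> simp [h]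
  have hdpe : dp * e = 0 := by
    funext i
    simp only [hdp, he, Pi.mul_apply, Pi.zero_apply]
    by_cases h : lam i ≤ 0 <;> simp [h]
  have hdme : dm * e = dm := by
    funext i
    simp only [hdm, he, Pi.mul_apply]
    by_cases h : lam i ≤ 0 <;> simp [h]
  have hM0 : M 0 = 0 := by
    have hz : Matrix.diagonal (0 : ι → ℂ) = 0 := by
      ext i j; by_cases h : i = j <;> simp [Matrix.diagonal, h]
    simp only [hM, hz, mul_zero, zero_mul]
  -- matrix identities
  have hDeq : ρ₀ - (t : ℂ) • ρ₁ = M dp - M dm := by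
    rw [hDspec, hsplit, ← hMsub]
  have hρ₀ : ρ₀ = M dp - M dm + (t : ℂ) • ρ₁ := by
    rw [← hDeq]; abel
  have hDpP : M dp * P = 0 := by rw [hPe, hMmul, hdpe, hM0]
  have hDmP : M dm * P = M dm := by rw [hPe, hMmul, hdme]
  -- positivity
  have hPpsd : P.PosSemidef := by
    refine hMpsd e fun i => ?_
    simp only [he]
    by_cases h : lam i ≤ 0 <;> simp [h]
  have h1P : (1 - P).PosSemidef := by
    have : (1 : Matrix ι ι ℂ) - P = M (1 - e) := by rw [← hM1, hMsub]
    rw [this]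
    refine hMpsd _ fun i => ?_
    simp only [he, Pi.sub_apply, Pi.one_apply]
    by_cases h : lam i ≤ 0 <;> simp [h]
  have hDppsd : (M dp).PosSemidef := by
    refine hMpsd dp fun i => ?_
    simp only [hdp]
    by_cases h : lam i ≤ 0
    · simp [h]
    · simp only [h, if_false]
      exact Complex.zero_le_real.mpr (le_of_lt (lt_of_not_ge h))
  have hDmpsd : (M dm).PosSemidef := by
    refine hMpsd dm fun i => ?_
    simp only [hdm]
    by_cases h : lam i ≤ 0
    · simp only [h, if_true]
      exact Complex.zero_le_real.mpr (by linarith)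
    · simp [h]
  -- main bound
  rw [hPdef, ge_iff_le]
  apply le_csInf
  · exact ⟨(Matrix.trace (ρ₀ * (1 - 0))).re, 0, Matrix.PosSemidef.zero,
      by simpa using Matrix.PosSemidef.one, by simpa using hβ.1, rfl⟩
  rintro x ⟨T, hT, h1T, hb, rfl⟩
  have key : Matrix.trace (ρ₀ * (1 - T)) =
      Matrix.trace (ρ₀ * P) - (t : ℂ) * Matrix.trace (ρ₁ * T) +
        (Matrix.trace (M dp * (1 - T)) + Matrix.trace (M dm * T) +
          (t : ℂ) * Matrix.trace (ρ₁ * (1 - P))) := by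
    rw [hρ₀]
    simp only [Matrix.add_mul, Matrix.sub_mul, Matrix.mul_sub, Matrix.mul_add,
      Matrix.smul_mul, Matrix.trace_add, Matrix.trace_sub, Matrix.trace_smul,
      Matrix.mul_one, hDpP, hDmP, Matrix.trace_zero, smul_eq_mul]
    ring
  have h1 : 0 ≤ (Matrix.trace (M dp * (1 - T))).re := re_trace_mul_nonneg hDppsd h1T
  have h2 : 0 ≤ (Matrix.trace (M dm * T)).re := re_trace_mul_nonneg hDmpsd hT
  have h3 : 0 ≤ (Matrix.trace (ρ₁ * (1 - P))).re := re_trace_mul_nonneg h₁ h1P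
  have hre : (Matrix.trace (ρ₀ * (1 - T))).re =
      (Matrix.trace (ρ₀ * P)).re - t * (Matrix.trace (ρ₁ * T)).re +
        ((Matrix.trace (M dp * (1 - T))).re + (Matrix.trace (M dm * T)).re +
          t * (Matrix.trace (ρ₁ * (1 - P))).re) := by
    rw [key]
    simp [Complex.add_re, Complex.sub_re, Complex.re_ofReal_mul]
  have htb : t * (Matrix.trace (ρ₁ * T)).re ≤ t * β :=
    mul_le_mul_of_nonneg_left hb ht
  have ht3 : 0 ≤ t * (Matrix.trace (ρ₁ * (1 - P))).re := mul_nonneg ht h3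
  rw [hre]
  linarith
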